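/- There exists a constant C > 0 such that for all ν > 0, γ₀, γ₁ ∈ (0,1), γ₂ > 0, and 0 < t ≤ T with T = ν⁻¹γ₀²γ₁², with ỹ(t) the unique positive zero of h₁(t,·): (i) −∫_{|y|≤ỹ(t)} h₁(t,y) dy ≤ C·( −∫_ℝ h₁(t,y) dy ); (ii) −∫_{|y|≤ỹ(t)} h₁(t,y) dy ≥ (1 + 1/C)·∫_{|y|≥ỹ(t)} h₁(t,y) dy, where both sides of (ii) are positive; that is, the integral of the negative part of h₁ is comparable to the total integral and strictly dominates the integral of the positive part. -/

import Mathlib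

open MeasureTheory Real Filter Set

noncomputable section

/-- The function `h₁(t,y) = γ₂·γ₁³·(4νt+γ₀²γ₁²)^{−3/2}·exp(−y²/(4νt+γ₀²γ₁²))
  − γ₂·γ₀^{−3}·exp(−y²/(γ₀²γ₁²))` from the proof of Proposition 2.4. -/
def h1fun (ν γ₀ γ₁ γ₂ : ℝ) (t y : ℝ) : ℝ :=
  γ₂ * γ₁^3 / (Real.sqrt (4*ν*t + γ₀^2*γ₁^2))^3 * Real.exp (-y^2 / (4*ν*t + γ₀^2*γ₁^2))
    - γ₂ / γ₀^3 * Real.exp (-y^2 / (γ₀^2*γ₁^2))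

/-- The unique positive zero `ỹ(t)` of `h₁(t,·)` (for `t > 0`). -/
def ytil (ν γ₀ γ₁ : ℝ) (t : ℝ) : ℝ :=
  Real.sqrt ((4*ν*t + γ₀^2*γ₁^2) * γ₀^2 * γ₁^2 / (4*ν*t)
    * Real.log ((Real.sqrt (4*ν*t + γ₀^2*γ₁^2))^3 / (γ₀^3 * γ₁^3)))

def gfun (a b y : ℝ) : ℝ :=
  Real.exp (-y^2/a) / (Real.sqrt a)^3 - Real.exp (-y^2/b) / (Real.sqrt b)^3

lemma sqrt_cube {a : ℝ} (ha : 0 ≤ a) : (Real.sqrt a)^3 = a * Real.sqrt a := by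
  rw [pow_succ, Real.sq_sqrt ha]

lemma gauss_integrable {α : ℝ} (hα : 0 < α) :
    Integrable (fun y : ℝ => Real.exp (-y^2 / α)) := by
  have h := integrable_exp_neg_mul_sq (show (0:ℝ) < α⁻¹ by positivity)
  have he : (fun y : ℝ => Real.exp (-y^2 / α)) = fun y => Real.exp (-α⁻¹ * y^2) := by
    funext y; congr 1; field_simp
  rw [he]; exact h

lemma gauss_integral {α : ℝ} (hα : 0 < α) :
    ∫ y : ℝ, Real.exp (-y^2 / α) = Real.sqrt π * Real.sqrt α := by
  have h := integral_gaussian α⁻¹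
  have he : (fun y : ℝ => Real.exp (-y^2 / α)) = fun y => Real.exp (-α⁻¹ * y^2) := by
    funext y; congr 1; field_simp
  rw [he, h, show π/α⁻¹ = π*α by field_simp, Real.sqrt_mul pi_nonneg]

lemma gfun_integrable {a b : ℝ} (ha : 0 < a) (hb : 0 < b) :
    Integrable (gfun a b) := by
  exact ((gauss_integrable ha).div_const _).sub ((gauss_integrable hb).div_const _)

lemma gfun_integral {a b : ℝ} (ha : 0 < a) (hb : 0 < b) :
    ∫ y : ℝ, gfun a b y = Real.sqrt π * (1/a - 1/b) := by
  have hsa' := Real.sqrt_pos.mpr ha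
  have hsb' := Real.sqrt_pos.mpr hb
  unfold gfun
  rw [integral_sub ((gauss_integrable ha).div_const _) ((gauss_integrable hb).div_const _),
    integral_div, integral_div, gauss_integral ha, gauss_integral hb,
    sqrt_cube ha.le, sqrt_cube hb.le]
  field_simp

lemma gfun_pointwise {a b : ℝ} (hb : 0 < b) (hab : b ≤ a) (ha5 : a ≤ 5*b) (y : ℝ) :
    gfun a b y ≤ 10 * (a - b) / (b^2 * Real.sqrt b) * Real.exp (-y^2/(10*b)) := by
  have ha : 0 < a := lt_of_lt_of_le hb hab
  have hsb := Real.sqrt_pos.mpr hb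
  have hsa := Real.sqrt_pos.mpr ha
  have hsba : Real.sqrt b ≤ Real.sqrt a := Real.sqrt_le_sqrt hab
  set EA := Real.exp (-y^2/a) with hEA
  set EB := Real.exp (-y^2/b) with hEB
  set E10 := Real.exp (-y^2/(10*b)) with hE10
  have hEApos : 0 < EA := Real.exp_pos _
  have hEBpos : 0 < EB := Real.exp_pos _
  have hE10pos : 0 < E10 := Real.exp_pos _
  have hd : 0 ≤ y^2/b - y^2/a := by
    have h := div_le_div_of_nonneg_left (sq_nonneg y) hb hab
    linarith
  -- step 1
  have step1 : gfun a b y ≤ (EA - EB) / (Real.sqrt b)^3 := by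
    unfold gfun
    rw [← hEA, ← hEB]
    have h1 : EA / (Real.sqrt a)^3 ≤ EA / (Real.sqrt b)^3 :=
      div_le_div_of_nonneg_left hEApos.le (by positivity)
        (pow_le_pow_left₀ hsb.le hsba 3)
    rw [sub_div]
    linarith
  -- step 2
  have step2 : EA - EB ≤ EA * (y^2/b - y^2/a) := by
    have hEBeq : EB = EA * Real.exp (-(y^2/b - y^2/a)) := by
      rw [hEA, hEB, ← Real.exp_add]; congr 1; ring
    have h2 : 1 - Real.exp (-(y^2/b - y^2/a)) ≤ y^2/b - y^2/a := by
      have := Real.add_one_le_exp (-(y^2/b - y^2/a)); linarith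
    nlinarith [mul_le_mul_of_nonneg_left h2 hEApos.le]
  -- step 3
  have step3 : EA ≤ E10 * E10 := by
    have he : E10 * E10 = Real.exp (-y^2/(5*b)) := by
      rw [hE10, ← Real.exp_add]; congr 1; ring
    rw [he, hEA]
    apply Real.exp_le_exp.mpr
    have h := div_le_div_of_nonneg_left (sq_nonneg y) ha ha5
    rw [neg_div, neg_div]
    linarith [h]
  -- step 4
  have step4 : y^2 * E10 ≤ 10*b := by
    have hu : y^2/(10*b) ≤ Real.exp (y^2/(10*b)) := by
      linarith [Real.add_one_le_exp (y^2/(10*b))]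
    have hprod : Real.exp (y^2/(10*b)) * E10 = 1 := by
      rw [hE10, ← Real.exp_add, show y^2/(10*b) + -y^2/(10*b) = 0 by ring, Real.exp_zero]
    have h1 : y^2/(10*b) * E10 ≤ 1 := by
      calc y^2/(10*b) * E10 ≤ Real.exp (y^2/(10*b)) * E10 :=
            mul_le_mul_of_nonneg_right hu hE10pos.le
        _ = 1 := hprod
    calc y^2 * E10 = 10*b*(y^2/(10*b) * E10) := by field_simp
      _ ≤ 10*b*1 := by nlinarith
      _ = 10*b := by ring
  -- combine
  calc gfun a b y ≤ (EA - EB) / (Real.sqrt b)^3 := step1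
    _ ≤ (EA * (y^2/b - y^2/a)) / (Real.sqrt b)^3 := by gcongr
    _ ≤ (E10 * E10 * (y^2/b - y^2/a)) / (Real.sqrt b)^3 := by gcongr
    _ = (y^2 * E10) * E10 * (a-b) / (a*b) / (Real.sqrt b)^3 := by
        field_simp
    _ ≤ (10*b) * E10 * (a-b) / (a*b) / (Real.sqrt b)^3 := by gcongr <;> linarith
    _ = (10 * E10 * (a-b)) / (a * (b*Real.sqrt b)) := by
        rw [sqrt_cube hb.le]; field_simp
    _ ≤ (10 * E10 * (a-b)) / (b * (b*Real.sqrt b)) :=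
        div_le_div_of_nonneg_left (by nlinarith) (by positivity) (by nlinarith [mul_le_mul_of_nonneg_right hab (mul_nonneg hb.le hsb.le)])
    _ = 10 * (a - b) / (b^2 * Real.sqrt b) * E10 := by field_simp

lemma gfun_nonneg_of {a b y : ℝ} (hb : 0 < b) (hab : b < a)
    (hy : a * b * Real.log ((Real.sqrt a)^3 / (Real.sqrt b)^3) ≤ y^2 * (a-b)) :
    0 ≤ gfun a b y := by
  have ha : 0 < a := hb.trans hab
  have hsa := Real.sqrt_pos.mpr ha
  have hsb := Real.sqrt_pos.mpr hb
  set r := (Real.sqrt a)^3 / (Real.sqrt b)^3 with hr_def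
  have hr : 0 < r := by positivity
  have hlog : Real.log r ≤ y^2/b - y^2/a := by
    have h2 : y^2/b - y^2/a = y^2*(a-b)/(a*b) := by field_simp
    rw [h2, le_div_iff₀ (by positivity)]
    linarith [hy]
  have hEB : Real.exp (-y^2/b) ≤ Real.exp (-y^2/a) * (1/r) := by
    have e1 : Real.exp (-y^2/b) = Real.exp (-y^2/a) * Real.exp (-(y^2/b - y^2/a)) := by
      rw [← Real.exp_add]; congr 1; ring
    have e2 : Real.exp (-(y^2/b - y^2/a)) ≤ 1/r := by
      rw [show (1:ℝ)/r = Real.exp (-(Real.log r)) by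
        rw [Real.exp_neg, Real.exp_log hr, one_div]]
      exact Real.exp_le_exp.mpr (by linarith)
    rw [e1]
    exact mul_le_mul_of_nonneg_left e2 (Real.exp_pos _).le
  have hkey : Real.exp (-y^2/b) / (Real.sqrt b)^3 ≤ Real.exp (-y^2/a) / (Real.sqrt a)^3 := by
    calc Real.exp (-y^2/b) / (Real.sqrt b)^3
        ≤ (Real.exp (-y^2/a) * (1/r)) / (Real.sqrt b)^3 := by gcongr
      _ = Real.exp (-y^2/a) / (Real.sqrt a)^3 := by
          rw [hr_def]; field_simp
  unfold gfun; linarith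

lemma gfun_pos_of {a b y : ℝ} (hb : 0 < b) (hab : b < a)
    (hy : a * b * Real.log ((Real.sqrt a)^3 / (Real.sqrt b)^3) < y^2 * (a-b)) :
    0 < gfun a b y := by
  have ha : 0 < a := hb.trans hab
  have hsa := Real.sqrt_pos.mpr ha
  have hsb := Real.sqrt_pos.mpr hb
  set r := (Real.sqrt a)^3 / (Real.sqrt b)^3 with hr_def
  have hr : 0 < r := by positivity
  have hlog : Real.log r < y^2/b - y^2/a := by
    have h2 : y^2/b - y^2/a = y^2*(a-b)/(a*b) := by field_simp
    rw [h2, lt_div_iff₀ (by positivity)]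
    linarith [hy]
  have hEB : Real.exp (-y^2/b) < Real.exp (-y^2/a) * (1/r) := by
    have e1 : Real.exp (-y^2/b) = Real.exp (-y^2/a) * Real.exp (-(y^2/b - y^2/a)) := by
      rw [← Real.exp_add]; congr 1; ring
    have e2 : Real.exp (-(y^2/b - y^2/a)) < 1/r := by
      rw [show (1:ℝ)/r = Real.exp (-(Real.log r)) by
        rw [Real.exp_neg, Real.exp_log hr, one_div]]
      exact Real.exp_lt_exp.mpr (by linarith)
    rw [e1]
    exact mul_lt_mul_of_pos_left e2 (Real.exp_pos _)
  have hkey : Real.exp (-y^2/b) / (Real.sqrt b)^3 < Real.exp (-y^2/a) / (Real.sqrt a)^3 := by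
    calc Real.exp (-y^2/b) / (Real.sqrt b)^3
        < (Real.exp (-y^2/a) * (1/r)) / (Real.sqrt b)^3 := by gcongr
      _ = Real.exp (-y^2/a) / (Real.sqrt a)^3 := by
          rw [hr_def]; field_simp
  unfold gfun; linarith

set_option maxHeartbeats 1000000 in
/-- inequality (2.9) (eq-neg-part) in the proof of Proposition 2.4.
For `0 < t ≤ T = ν⁻¹γ₀²γ₁²`: the integral of the negative part of `h₁` (over
`|y| ≤ ỹ(t)`) is comparable to the total integral and strictly dominates the integral
of the positive part (over `|y| ≥ ỹ(t)`), both of the latter being positive. -/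
theorem h1_negative_part_dominates :
    ∃ C : ℝ, 0 < C ∧ ∀ ν γ₀ γ₁ γ₂ t : ℝ, 0 < ν →
      γ₀ ∈ Set.Ioo (0:ℝ) 1 → γ₁ ∈ Set.Ioo (0:ℝ) 1 → 0 < γ₂ →
      0 < t → t ≤ ν⁻¹ * γ₀^2 * γ₁^2 →
      (-(∫ y in (-(ytil ν γ₀ γ₁ t))..(ytil ν γ₀ γ₁ t), h1fun ν γ₀ γ₁ γ₂ t y)
        ≤ C * (-(∫ y : ℝ, h1fun ν γ₀ γ₁ γ₂ t y))) ∧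
      ((1 + 1/C) * (∫ y in {y : ℝ | ytil ν γ₀ γ₁ t ≤ |y|}, h1fun ν γ₀ γ₁ γ₂ t y)
        ≤ -(∫ y in (-(ytil ν γ₀ γ₁ t))..(ytil ν γ₀ γ₁ t), h1fun ν γ₀ γ₁ γ₂ t y)) ∧
      0 < (∫ y in {y : ℝ | ytil ν γ₀ γ₁ t ≤ |y|}, h1fun ν γ₀ γ₁ γ₂ t y) ∧
      0 < -(∫ y in (-(ytil ν γ₀ γ₁ t))..(ytil ν γ₀ γ₁ t), h1fun ν γ₀ γ₁ γ₂ t y) := by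
  refine ⟨161, by norm_num, ?_⟩
  rintro ν γ₀ γ₁ γ₂ t hν ⟨hγ₀, hγ₀1⟩ ⟨hγ₁, hγ₁1⟩ hγ₂ ht hT
  obtain ⟨b, hb_def⟩ : ∃ b : ℝ, b = γ₀^2*γ₁^2 := ⟨_, rfl⟩
  obtain ⟨a, ha_def⟩ : ∃ a : ℝ, a = 4*ν*t + γ₀^2*γ₁^2 := ⟨_, rfl⟩
  obtain ⟨c, hc_def⟩ : ∃ c : ℝ, c = γ₂*γ₁^3 := ⟨_, rfl⟩
  obtain ⟨yt, hy_def⟩ : ∃ z : ℝ, z = ytil ν γ₀ γ₁ t := ⟨_, rfl⟩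
  rw [← hy_def]
  have hb : 0 < b := by rw [hb_def]; positivity
  have hab : b < a := by rw [ha_def, hb_def]; nlinarith [mul_pos hν ht]
  have ha : 0 < a := hb.trans hab
  have haminus : 0 < a - b := sub_pos.mpr hab
  have ha5 : a ≤ 5*b := by
    have h := mul_le_mul_of_nonneg_left hT hν.le
    rw [show ν*(ν⁻¹*γ₀^2*γ₁^2) = γ₀^2*γ₁^2 by field_simp] at h
    rw [ha_def, hb_def]; nlinarith
  have hc : 0 < c := by rw [hc_def]; positivity
  have hsb : Real.sqrt b = γ₀*γ₁ := by
    rw [hb_def, show γ₀^2*γ₁^2 = (γ₀*γ₁)^2 by ring, Real.sqrt_sq (by positivity)]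
  have hsbpos : 0 < Real.sqrt b := Real.sqrt_pos.mpr hb
  have hsapos : 0 < Real.sqrt a := Real.sqrt_pos.mpr ha
  -- h1fun = c • gfun a b
  have hfe : h1fun ν γ₀ γ₁ γ₂ t = fun y => c * gfun a b y := by
    funext y
    simp only [h1fun, gfun]
    rw [hsb, hc_def, ← ha_def, ← hb_def]
    have h0 : γ₀ ≠ 0 := ne_of_gt hγ₀
    have h1 : γ₁ ≠ 0 := ne_of_gt hγ₁
    have h2 : (Real.sqrt a)^3 ≠ 0 := by positivity
    field_simp
  -- yt in terms of a, b
  obtain ⟨L, hL_def⟩ : ∃ L : ℝ, L = Real.log ((Real.sqrt a)^3 / (Real.sqrt b)^3) := ⟨_, rfl⟩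
  have hyt : yt = Real.sqrt (a*b/(a-b) * L) := by
    rw [hy_def, hL_def]
    unfold ytil
    rw [hsb, ha_def, hb_def]
    congr 1
    rw [show 4*ν*t + γ₀^2*γ₁^2 - γ₀^2*γ₁^2 = 4*ν*t by ring,
      show (γ₀*γ₁:ℝ)^3 = γ₀^3*γ₁^3 by ring]
    ring
  have hL : 0 ≤ L := by
    rw [hL_def]
    apply Real.log_nonneg
    rw [le_div_iff₀ (by positivity), one_mul]
    exact pow_le_pow_left₀ hsbpos.le (Real.sqrt_le_sqrt hab.le) 3
  have hEnn : 0 ≤ a*b/(a-b) * L :=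
    mul_nonneg (div_nonneg (by positivity) haminus.le) hL
  have hy0 : 0 ≤ yt := by rw [hyt]; exact Real.sqrt_nonneg _
  have hysq : yt^2 = a*b/(a-b) * L := by rw [hyt, Real.sq_sqrt hEnn]
  -- sign facts
  have hsign : ∀ y : ℝ, yt ≤ |y| → 0 ≤ gfun a b y := by
    intro y hy
    apply gfun_nonneg_of hb hab
    rw [← hL_def]
    have h1 : yt^2 ≤ y^2 := by rw [← sq_abs y]; exact pow_le_pow_left₀ hy0 hy 2
    have h2 : yt^2 * (a-b) ≤ y^2*(a-b) := mul_le_mul_of_nonneg_right h1 haminus.le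
    rw [hysq] at h2
    calc a*b*L = a*b/(a-b)*L*(a-b) := by field_simp
      _ ≤ y^2*(a-b) := h2
  have hsignlt : ∀ y : ℝ, yt < y → 0 < gfun a b y := by
    intro y hy
    apply gfun_pos_of hb hab
    rw [← hL_def]
    have h1 : yt^2 < y^2 := by
      have := pow_lt_pow_left₀ hy hy0 (n := 2) (by norm_num)
      exact this
    have h2 : yt^2 * (a-b) < y^2*(a-b) := mul_lt_mul_of_pos_right h1 haminus
    rw [hysq] at h2
    calc a*b*L = a*b/(a-b)*L*(a-b) := by field_simp
      _ < y^2*(a-b) := h2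
  -- measurability, integrability
  have hmeas : MeasurableSet {y : ℝ | yt ≤ |y|} :=
    measurableSet_le measurable_const continuous_abs.measurable
  have hgint : Integrable (gfun a b) := gfun_integrable ha hb
  obtain ⟨M, hM_def⟩ : ∃ M : ℝ, M = 10*(a-b)/(b^2*Real.sqrt b) := ⟨_, rfl⟩
  have hM0 : 0 ≤ M := by rw [hM_def]; exact div_nonneg (by nlinarith) (by positivity)
  have hbint : Integrable (fun y : ℝ => M * Real.exp (-y^2/(10*b))) :=
    (gauss_integrable (show (0:ℝ) < 10*b by positivity)).const_mul _
  obtain ⟨D, hD_def⟩ : ∃ D : ℝ, D = Real.sqrt π * (a-b)/(a*b) := ⟨_, rfl⟩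
  have hD : 0 < D := by
    rw [hD_def]
    exact div_pos (mul_pos (Real.sqrt_pos.mpr pi_pos) haminus) (mul_pos ha hb)
  obtain ⟨P, hP_def⟩ : ∃ P : ℝ, P = ∫ y in {y : ℝ | yt ≤ |y|}, gfun a b y := ⟨_, rfl⟩
  -- P ≤ 160 D
  have hs10 : Real.sqrt 10 ≤ 16/5 := by
    rw [show (16/5:ℝ) = Real.sqrt ((16/5)^2) from (Real.sqrt_sq (by norm_num)).symm]
    exact Real.sqrt_le_sqrt (by norm_num)
  have hPle : P ≤ 160 * D := by
    have h1 : P ≤ ∫ y in {y : ℝ | yt ≤ |y|}, M * Real.exp (-y^2/(10*b)) := by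
      rw [hP_def]
      exact setIntegral_mono_on hgint.integrableOn hbint.integrableOn hmeas
        (fun y _ => by rw [hM_def]; exact gfun_pointwise hb hab.le ha5 y)
    have h2 : ∫ y in {y : ℝ | yt ≤ |y|}, M * Real.exp (-y^2/(10*b))
        ≤ ∫ y : ℝ, M * Real.exp (-y^2/(10*b)) :=
      setIntegral_le_integral hbint (ae_of_all _ fun y => by
        exact mul_nonneg hM0 (Real.exp_pos _).le)
    have h3 : ∫ y : ℝ, M * Real.exp (-y^2/(10*b)) = M * (Real.sqrt π * Real.sqrt (10*b)) := by
      rw [MeasureTheory.integral_const_mul _ _, gauss_integral (show (0:ℝ) < 10*b by positivity)]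
    have h4 : M * (Real.sqrt π * Real.sqrt (10*b)) ≤ 160 * D := by
      rw [hM_def, hD_def, Real.sqrt_mul (by norm_num : (0:ℝ) ≤ 10) b,
        div_mul_eq_mul_div, ← mul_div_assoc, div_le_div_iff₀ (by positivity) (by positivity)]
      have h16 : Real.sqrt 10 * a ≤ 16*b := by
        have hx := mul_le_mul_of_nonneg_right hs10 ha.le
        have hy := mul_le_mul_of_nonneg_left ha5 (by norm_num : (0:ℝ) ≤ 16/5)
        linarith
      nlinarith [mul_nonneg (mul_nonneg (mul_nonneg (Real.sqrt_nonneg π) hsbpos.le)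
          (mul_nonneg (sub_nonneg.mpr hab.le) hb.le))
          (sub_nonneg.mpr h16)]
    linarith
  -- P > 0
  have hPpos : 0 < P := by
    rw [hP_def]
    rw [setIntegral_pos_iff_support_of_nonneg_ae
      ((ae_restrict_iff' hmeas).mpr (ae_of_all _ hsign)) hgint.integrableOn]
    have hsub : Ioi yt ⊆ Function.support (gfun a b) ∩ {y : ℝ | yt ≤ |y|} := by
      intro y hy
      have hy' : yt < y := hy
      exact ⟨(hsignlt y hy').ne', by
        simp only [mem_setOf_eq]
        exact le_trans hy'.le (le_abs_self y)⟩
    refine lt_of_lt_of_le ?_ (measure_mono hsub)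
    rw [Real.volume_Ioi]
    simp
  -- total integral
  have hTD : ∫ y : ℝ, gfun a b y = -D := by
    rw [gfun_integral ha hb, hD_def]
    field_simp
    ring
  -- decomposition
  have hcompl : {y : ℝ | yt ≤ |y|}ᶜ = Ioo (-yt) yt := by
    ext y
    simp [mem_setOf_eq, not_le, abs_lt, mem_Ioo]
  have hIoc : ∫ y in (-yt)..yt, gfun a b y = ∫ y in Ioo (-yt) yt, gfun a b y := by
    rw [intervalIntegral.integral_of_le (by linarith : -yt ≤ yt),
      MeasureTheory.integral_Ioc_eq_integral_Ioo]
  have hdecomp := integral_add_compl hmeas hgint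
  have hQ : ∫ y in (-yt)..yt, gfun a b y = -D - P := by
    rw [hIoc, ← hcompl]
    rw [hP_def] at *
    linarith [hdecomp, hTD]
  -- assemble
  simp only [hfe]
  rw [MeasureTheory.integral_const_mul, MeasureTheory.integral_const_mul,
    intervalIntegral.integral_const_mul, hQ, hTD, ← hP_def]
  norm_num
  refine ⟨by nlinarith, by nlinarith, by nlinarith, by nlinarith⟩
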